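/- (Bauer–Fike) Let A ∈ ℂ^{n×n} be diagonalizable, A = V Λ V⁻¹ with Λ = diag(λ₁,…,λₙ), and let E ∈ ℂ^{n×n}. Then every eigenvalue λ̃ of à = A + E satisfies min_k |λ̃ − λ_k| ≤ κ(V) ‖E‖₂, where κ(V) = ‖V‖₂ ‖V⁻¹‖₂ and ‖·‖₂ is the spectral (operator 2-)norm. -/

import Mathlib

open Matrix BigOperators

/-- The spectral (operator `2`-) norm of a square complex matrix, i.e. the
operator norm of the induced map on `EuclideanSpace ℂ (Fin n)`. -/
noncomputable def specNorm {n : ℕ} (A : Matrix (Fin n) (Fin n) ℂ) : ℝ :=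
  ‖Matrix.toEuclideanCLM (𝕜 := ℂ) A‖

set_option maxHeartbeats 1000000

/-- **Bauer–Fike eigenvalue sensitivity.**  Let `A = V Λ V⁻¹` be
diagonalizable with `Λ = diag(λ₁,…,λₙ)`, and let `E` be a perturbation.
Then every eigenvalue `μ` of `Ã = A + E` (i.e. `Ã − μ I` singular) satisfies
`min_k |μ − λ_k| ≤ κ(V) ‖E‖₂`, where `κ(V) = ‖V‖₂ ‖V⁻¹‖₂`. -/
theorem bauer_fike
    (n : ℕ) (A V E : Matrix (Fin n) (Fin n) ℂ) (l : Fin n → ℂ)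
    (hV : IsUnit V) (hA : A = V * Matrix.diagonal l * V⁻¹)
    (μ : ℂ) (hμ : ¬ IsUnit (A + E - μ • (1 : Matrix (Fin n) (Fin n) ℂ))) :
    ∃ k : Fin n, ‖μ - l k‖ ≤ (specNorm V * specNorm V⁻¹) * specNorm E := by
  by_contra hcon
  push_neg at hcon
  set c : ℝ := (specNorm V * specNorm V⁻¹) * specNorm E with hc
  have hc0 : 0 ≤ c := by
    have := norm_nonneg (Matrix.toEuclideanCLM (𝕜 := ℂ) V)
    have := norm_nonneg (Matrix.toEuclideanCLM (𝕜 := ℂ) V⁻¹)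
    have := norm_nonneg (Matrix.toEuclideanCLM (𝕜 := ℂ) E)
    positivity
  have hVdet : IsUnit V.det := (Matrix.isUnit_iff_isUnit_det V).mp hV
  have hVV : V * V⁻¹ = 1 := Matrix.mul_nonsing_inv V hVdet
  have hVV' : V⁻¹ * V = 1 := Matrix.nonsing_inv_mul V hVdet
  set D : Matrix (Fin n) (Fin n) ℂ := Matrix.diagonal (fun k => l k - μ) with hD
  set M : Matrix (Fin n) (Fin n) ℂ := V⁻¹ * E * V with hMdef
  -- factor the perturbed shifted matrix
  have hfact : A + E - μ • (1 : Matrix (Fin n) (Fin n) ℂ) = V * (D + M) * V⁻¹ := by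
    have hDsplit : D = Matrix.diagonal l - μ • (1 : Matrix (Fin n) (Fin n) ℂ) := by
      ext i j
      rcases eq_or_ne i j with rfl | h
      · simp [hD]
      · simp [hD, Matrix.diagonal_apply_ne _ h, Matrix.one_apply_ne h]
    rw [hA, hDsplit, hMdef]
    have h1 : V * (Matrix.diagonal l - μ • (1 : Matrix (Fin n) (Fin n) ℂ) + V⁻¹ * E * V) * V⁻¹
        = V * Matrix.diagonal l * V⁻¹ - μ • (V * V⁻¹) + V * V⁻¹ * E * (V * V⁻¹) := by
      noncomm_ring
    rw [h1, hVV]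
    noncomm_ring
  -- hence `D + M` is singular
  have hDM : ¬ IsUnit (D + M) := by
    intro hu
    exact hμ (by rw [hfact]; exact (hV.mul hu).mul (Matrix.isUnit_nonsing_inv_iff.mpr hV))
  have hdet : (D + M).det = 0 := by
    by_contra hne
    exact hDM ((Matrix.isUnit_iff_isUnit_det _).mpr (isUnit_iff_ne_zero.mpr hne))
  obtain ⟨x, hx0, hxker⟩ := (Matrix.exists_mulVec_eq_zero_iff).mpr hdet
  obtain ⟨k0, hk0⟩ := Function.ne_iff.mp hx0
  have hk0 : x k0 ≠ 0 := by simpa using hk0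
  -- move to Euclidean space
  set f := Matrix.toEuclideanCLM (𝕜 := ℂ) (n := Fin n)
  set y : EuclideanSpace ℂ (Fin n) := (WithLp.equiv 2 (Fin n → ℂ)).symm x with hy
  have happ : ∀ B : Matrix (Fin n) (Fin n) ℂ,
      f B y = (WithLp.equiv 2 (Fin n → ℂ)).symm (B.mulVec x) := by
    intro B
    rw [hy]; rfl
  have hzero : f D y + f M y = 0 := by
    have : f (D + M) y = 0 := by
      rw [happ, hxker]; rfl
    rw [map_add] at this
    simpa using this
  -- upper bound
  have hMnorm : ‖f M‖ ≤ c := by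
    calc ‖f M‖ = ‖f V⁻¹ * f E * f V‖ := by rw [hMdef, _root_.map_mul, _root_.map_mul]
    _ ≤ ‖f V⁻¹ * f E‖ * ‖f V‖ := norm_mul_le _ _
    _ ≤ ‖f V⁻¹‖ * ‖f E‖ * ‖f V‖ :=
        mul_le_mul_of_nonneg_right (norm_mul_le _ _) (norm_nonneg _)
    _ = c := by rw [hc]; unfold specNorm; ring
  have hub : ‖f D y‖ ≤ c * ‖y‖ := by
    have h1 : f D y = - f M y := by linear_combination (norm := abel) hzero
    rw [h1, norm_neg]
    calc ‖f M y‖ ≤ ‖f M‖ * ‖y‖ := (f M).le_opNorm y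
    _ ≤ c * ‖y‖ := mul_le_mul_of_nonneg_right hMnorm (norm_nonneg _)
  -- lower bound via componentwise computation
  have hDy : ∀ i, (f D y) i = (l i - μ) * x i := by
    intro i
    rw [happ]
    simp [hD, Matrix.mulVec_diagonal, WithLp.equiv_symm_apply, PiLp.toLp_apply]
  have hyi : ∀ i, y i = x i := fun i => rfl
  have hsum : c ^ 2 * ‖y‖ ^ 2 < ‖f D y‖ ^ 2 := by
    rw [EuclideanSpace.norm_eq y, EuclideanSpace.norm_eq (f D y),
      Real.sq_sqrt (by positivity), Real.sq_sqrt (by positivity), Finset.mul_sum]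
    refine Finset.sum_lt_sum ?_ ⟨k0, Finset.mem_univ k0, ?_⟩
    · intro i _
      rw [hDy, hyi, norm_mul]
      have h1 : c ≤ ‖l i - μ‖ := by
        have := (hcon i).le
        rwa [← norm_neg, neg_sub] at this
      have := mul_le_mul_of_nonneg_right
        (mul_le_mul h1 h1 hc0 (norm_nonneg _)) (sq_nonneg ‖x i‖)
      calc c ^ 2 * ‖x i‖ ^ 2 = c * c * ‖x i‖ ^ 2 := by ring
      _ ≤ ‖l i - μ‖ * ‖l i - μ‖ * ‖x i‖ ^ 2 := this
      _ = (‖l i - μ‖ * ‖x i‖) ^ 2 := by ring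
    · rw [hDy, hyi, norm_mul]
      have h1 : c < ‖l k0 - μ‖ := by
        have := hcon k0
        rwa [← norm_neg, neg_sub] at this
      have hxk : 0 < ‖x k0‖ := norm_pos_iff.mpr hk0
      have h2 := mul_self_lt_mul_self (mul_nonneg hc0 hxk.le) (mul_lt_mul_of_pos_right h1 hxk)
      nlinarith [h2]
  have hlt : c * ‖y‖ < ‖f D y‖ := by
    apply lt_of_pow_lt_pow_left₀ 2 (norm_nonneg _)
    calc (c * ‖y‖) ^ 2 = c ^ 2 * ‖y‖ ^ 2 := by ring
    _ < ‖f D y‖ ^ 2 := hsum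
  linarith
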